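/- arXiv:1902.07024 — 3 statements merged into one kernel-verified Lean document; each statement's English description precedes it below -/
import Mathlib

section
/- Let A ∈ C^{n×n×p} and let f be a function defined on the spectrum of bcirc(A). If bcirc(A) = (F_p^H ⊗ I_n) diag(A₁,...,A_p) (F_p ⊗ I_n), then the tensor T-function satisfies f(A) = bcirc^{-1}( (F_p^H ⊗ I_n) diag(f(A₁),...,f(A_p)) (F_p ⊗ I_n) ); equivalently bcirc(f(A)) = f(bcirc(A)). -/
open Matrix Kronecker Complex Polynomial

noncomputable section

/-- Block circulant matrix of a third-order tensor given by its frontal slices. -/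
def bcirc {m n p : ℕ} (A : Fin p → Matrix (Fin m) (Fin n) ℂ) :
    Matrix (Fin p × Fin m) (Fin p × Fin n) ℂ :=
  Matrix.of fun jr kc => A (jr.1 - kc.1) jr.2 kc.2

/-- The tensor T-product. -/
def tmul {m n s p : ℕ} (A : Fin p → Matrix (Fin m) (Fin n) ℂ)
    (B : Fin p → Matrix (Fin n) (Fin s) ℂ) : Fin p → Matrix (Fin m) (Fin s) ℂ :=
  fun i => ∑ j : Fin p, A (i - j) * B j

/-- The identity tensor. -/
def tId {n p : ℕ} [NeZero p] : Fin p → Matrix (Fin n) (Fin n) ℂ :=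
  fun i => if i = 0 then 1 else 0

/-- T-product powers of a tensor. -/
def tpow {n p : ℕ} [NeZero p] (A : Fin p → Matrix (Fin n) (Fin n) ℂ) : ℕ → Fin p → Matrix (Fin n) (Fin n) ℂ
  | 0 => tId
  | k + 1 => tmul (tpow A k) A

/-- Conjugate transpose of a tensor. -/
def tconjT {m n p : ℕ} [NeZero p] (A : Fin p → Matrix (Fin m) (Fin n) ℂ) :
    Fin p → Matrix (Fin n) (Fin m) ℂ :=
  fun i => (A (-i))ᴴ

/-- Invertibility with respect to the T-product. -/
def TInvertible {n p : ℕ} [NeZero p] (A : Fin p → Matrix (Fin n) (Fin n) ℂ) : Prop :=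
  ∃ B, tmul A B = tId ∧ tmul B A = tId

/-- `fold` of an `np × n` matrix back into a tensor (first block column). -/
def tfold {n p : ℕ} [NeZero p] (M : Matrix (Fin p × Fin n) (Fin p × Fin n) ℂ) :
    Fin p → Matrix (Fin n) (Fin n) ℂ :=
  fun i => Matrix.of fun r c => M (i, r) ((0 : Fin p), c)

/-- The primitive root ω = e^{-2πi/p}. -/
def tomega (p : ℕ) : ℂ := Complex.exp (-2 * Real.pi * Complex.I / p)

/-- The (unitary) discrete Fourier matrix. -/
def fourierMat (p : ℕ) : Matrix (Fin p) (Fin p) ℂ :=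
  Matrix.of fun j k => tomega p ^ ((j : ℕ) * (k : ℕ)) / Real.sqrt p

/-- Block diagonal matrix with `p` diagonal blocks of size `n × n`. -/
def bdiag {n p : ℕ} (B : Fin p → Matrix (Fin n) (Fin n) ℂ) :
    Matrix (Fin p × Fin n) (Fin p × Fin n) ℂ :=
  Matrix.of fun jr kc => if jr.1 = kc.1 then B jr.1 jr.2 kc.2 else 0


/-- The tensor T-function induced by a scalar polynomial (by Hermite interpolation,
a function defined on the spectrum of `bcirc A` acts as a polynomial):
`f(A) = fold (f(bcirc A) · Ê₁)`. -/
def tfun {n p : ℕ} [NeZero p] (q : Polynomial ℂ)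
    (A : Fin p → Matrix (Fin n) (Fin n) ℂ) : Fin p → Matrix (Fin n) (Fin n) ℂ :=
  tfold (Polynomial.aeval (bcirc A) q)

lemma tomega_prim (p : ℕ) [NeZero p] : IsPrimitiveRoot (tomega p) p := by
  have h := Complex.isPrimitiveRoot_exp p (NeZero.ne p)
  have : tomega p = (Complex.exp (2 * Real.pi * Complex.I / p))⁻¹ := by
    rw [← Complex.exp_neg, tomega]; ring_nf
  rw [this]; exact h.inv

lemma tomega_ne_zero (p : ℕ) : tomega p ≠ 0 := Complex.exp_ne_zero _

lemma conj_tomega (p : ℕ) : (starRingEnd ℂ) (tomega p) = (tomega p)⁻¹ := by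
  rw [tomega, ← Complex.exp_conj, ← Complex.exp_neg]
  congr 1
  rw [map_div₀]
  simp [Complex.conj_I, map_ofNat]
  ring

lemma fourier_mul_conjT (p : ℕ) [NeZero p] : fourierMat p * (fourierMat p)ᴴ = 1 := by
  have hp : 0 < p := Nat.pos_of_ne_zero (NeZero.ne p)
  ext j k
  simp only [Matrix.mul_apply, fourierMat, Matrix.conjTranspose_apply, Matrix.of_apply,
    RCLike.star_def]
  have hsqrt : ((Real.sqrt p : ℂ)) * ((Real.sqrt p : ℂ)) = (p : ℂ) := by
    have : (Real.sqrt p : ℝ) * (Real.sqrt p) = p := Real.mul_self_sqrt (by positivity)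
    exact_mod_cast this
  have hterm : ∀ l : Fin p,
      tomega p ^ ((j : ℕ) * (l : ℕ)) / Real.sqrt p *
        (starRingEnd ℂ) (tomega p ^ ((k : ℕ) * (l : ℕ)) / Real.sqrt p) =
      (tomega p ^ (j : ℕ) * ((tomega p) ^ (k : ℕ))⁻¹) ^ (l : ℕ) / p := by
    intro l
    rw [map_div₀, map_pow, conj_tomega]
    have hc : (starRingEnd ℂ) ((Real.sqrt p : ℂ)) = (Real.sqrt p : ℂ) := by
      simp [Complex.conj_ofReal]
    rw [hc, div_mul_div_comm, hsqrt]
    congr 1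
    simp [inv_pow, mul_pow, ← pow_mul]
  rw [Finset.sum_congr rfl (fun l _ => hterm l)]
  rw [← Finset.sum_div]
  by_cases hjk : j = k
  · subst hjk
    simp [mul_inv_cancel₀ (pow_ne_zero _ (tomega_ne_zero p)), Matrix.one_apply,
      Finset.card_univ, div_eq_iff (show (p:ℂ) ≠ 0 by exact_mod_cast hp.ne')]
  · have hne : tomega p ^ (j : ℕ) * ((tomega p) ^ (k : ℕ))⁻¹ ≠ 1 := by
      intro hcon
      apply hjk
      have : tomega p ^ (j : ℕ) = tomega p ^ (k : ℕ) := by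
        field_simp at hcon
        exact (div_eq_one_iff_eq (pow_ne_zero _ (tomega_ne_zero p))).mp hcon
      exact Fin.ext ((tomega_prim p).pow_inj j.isLt k.isLt this)
    have hpow : (tomega p ^ (j : ℕ) * ((tomega p) ^ (k : ℕ))⁻¹) ^ p = 1 := by
      rw [mul_pow, ← pow_mul, ← inv_pow, ← pow_mul, mul_comm (j:ℕ) p, mul_comm (k:ℕ) p,
        pow_mul, pow_mul, (tomega_prim p).pow_eq_one, one_pow]
      simp [inv_pow, (tomega_prim p).pow_eq_one]
    rw [Fin.sum_univ_eq_sum_range (fun l => (tomega p ^ (j:ℕ) * ((tomega p)^(k:ℕ))⁻¹) ^ l) p,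
      geom_sum_eq hne, hpow]
    simp [Matrix.one_apply, hjk]

def IsBC {n p : ℕ} [NeZero p] (M : Matrix (Fin p × Fin n) (Fin p × Fin n) ℂ) : Prop :=
  ∀ i k r c, M (i, r) (k, c) = M (i - k, r) (0, c)

lemma isBC_bcirc {n p : ℕ} [NeZero p] (A : Fin p → Matrix (Fin n) (Fin n) ℂ) :
    IsBC (bcirc A) := by
  intro i k r c; simp [bcirc]

lemma IsBC.zero {n p : ℕ} [NeZero p] : IsBC (0 : Matrix (Fin p × Fin n) (Fin p × Fin n) ℂ) := by
  intro i k r c; simp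

lemma IsBC.one {n p : ℕ} [NeZero p] : IsBC (1 : Matrix (Fin p × Fin n) (Fin p × Fin n) ℂ) := by
  intro i k r c
  simp [Matrix.one_apply, Prod.ext_iff, sub_eq_zero]

lemma IsBC.add {n p : ℕ} [NeZero p] {M N : Matrix (Fin p × Fin n) (Fin p × Fin n) ℂ}
    (hM : IsBC M) (hN : IsBC N) : IsBC (M + N) := by
  intro i k r c; simp [Matrix.add_apply, hM i k r c, hN i k r c]

lemma IsBC.smul {n p : ℕ} [NeZero p] {M : Matrix (Fin p × Fin n) (Fin p × Fin n) ℂ}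
    (hM : IsBC M) (a : ℂ) : IsBC (a • M) := by
  intro i k r c; simp [hM i k r c]

lemma IsBC.mul {n p : ℕ} [NeZero p] {M N : Matrix (Fin p × Fin n) (Fin p × Fin n) ℂ}
    (hM : IsBC M) (hN : IsBC N) : IsBC (M * N) := by
  intro i k r c
  simp only [Matrix.mul_apply, Fintype.sum_prod_type]
  refine Fintype.sum_equiv (Equiv.subRight k) _ _ fun l => ?_
  refine Finset.sum_congr rfl fun s _ => ?_
  simp only [Equiv.subRight_apply]
  rw [hM i l r s, hN l k s c, hM (i-k) (l-k) r s, hN (l-k) 0 s c]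
  rw [sub_sub_sub_cancel_right]

lemma IsBC.pow {n p : ℕ} [NeZero p] {M : Matrix (Fin p × Fin n) (Fin p × Fin n) ℂ}
    (hM : IsBC M) (k : ℕ) : IsBC (M ^ k) := by
  induction k with
  | zero => simpa using IsBC.one
  | succ k ih => rw [pow_succ]; exact ih.mul hM

lemma IsBC.aeval {n p : ℕ} [NeZero p] {M : Matrix (Fin p × Fin n) (Fin p × Fin n) ℂ}
    (hM : IsBC M) (q : Polynomial ℂ) : IsBC (Polynomial.aeval M q) := by
  rw [Polynomial.aeval_eq_sum_range]
  apply Finset.sum_induction _ IsBC (fun a b ha hb => ha.add hb) IsBC.zero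
  intro i _
  exact (hM.pow i).smul _

lemma bcirc_tfold {n p : ℕ} [NeZero p] {M : Matrix (Fin p × Fin n) (Fin p × Fin n) ℂ}
    (hM : IsBC M) : bcirc (tfold M) = M := by
  ext ⟨j, r⟩ ⟨k, c⟩
  rw [hM j k r c]
  simp [bcirc, tfold]

lemma bdiag_mul {n p : ℕ} (B C : Fin p → Matrix (Fin n) (Fin n) ℂ) :
    bdiag B * bdiag C = bdiag (fun i => B i * C i) := by
  ext ⟨j, r⟩ ⟨k, c⟩
  simp only [Matrix.mul_apply, bdiag, Matrix.of_apply, Fintype.sum_prod_type]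
  rw [Finset.sum_eq_single j]
  · by_cases hjk : j = k <;> simp [hjk, Matrix.mul_apply]
  · intro l _ hl; simp [Ne.symm hl]
  · simp

lemma bdiag_one {n p : ℕ} : bdiag (fun _ : Fin p => (1 : Matrix (Fin n) (Fin n) ℂ)) = 1 := by
  ext ⟨j, r⟩ ⟨k, c⟩
  simp only [bdiag, Matrix.of_apply, Matrix.one_apply, Prod.ext_iff]
  by_cases h1 : j = k <;> by_cases h2 : r = c <;> simp [h1, h2]

lemma bdiag_add {n p : ℕ} (B C : Fin p → Matrix (Fin n) (Fin n) ℂ) :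
    bdiag B + bdiag C = bdiag (fun i => B i + C i) := by
  ext ⟨j, r⟩ ⟨k, c⟩
  by_cases hjk : j = k <;> simp [bdiag, hjk]

lemma bdiag_smul {n p : ℕ} (a : ℂ) (B : Fin p → Matrix (Fin n) (Fin n) ℂ) :
    a • bdiag B = bdiag (fun i => a • B i) := by
  ext ⟨j, r⟩ ⟨k, c⟩
  by_cases hjk : j = k <;> simp [bdiag, hjk]

lemma bdiag_pow {n p : ℕ} (B : Fin p → Matrix (Fin n) (Fin n) ℂ) (k : ℕ) :
    (bdiag B) ^ k = bdiag (fun i => B i ^ k) := by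
  induction k with
  | zero => simp [bdiag_one]
  | succ k ih => rw [pow_succ, ih, bdiag_mul]; simp [pow_succ]

lemma aeval_bdiag {n p : ℕ} (B : Fin p → Matrix (Fin n) (Fin n) ℂ) (q : Polynomial ℂ) :
    Polynomial.aeval (bdiag B) q = bdiag (fun i => Polynomial.aeval (B i) q) := by
  induction q using Polynomial.induction_on' with
  | add f g hf hg =>
    simp only [map_add, hf, hg, bdiag_add]
  | monomial k a =>
    rw [Polynomial.aeval_monomial, bdiag_pow, Algebra.algebraMap_eq_smul_one, smul_mul_assoc,
      one_mul, bdiag_smul]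
    have h : ∀ i : Fin p, Polynomial.aeval (B i) ((Polynomial.monomial k) a) = a • B i ^ k := by
      intro i
      rw [Polynomial.aeval_monomial, Algebra.algebraMap_eq_smul_one, smul_mul_assoc, one_mul]
    simp only [h]

lemma mconj_pow {α : Type*} [Fintype α] [DecidableEq α]
    {U V N : Matrix α α ℂ} (hVU : V * U = 1) (k : ℕ) :
    (U * N * V) ^ k = U * N ^ k * V := by
  induction k with
  | zero => simp [mul_eq_one_comm.mp hVU]
  | succ k ih =>
    rw [pow_succ, ih, pow_succ]
    calc U * N ^ k * V * (U * N * V) = U * N ^ k * (V * U) * N * V := by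
          simp only [Matrix.mul_assoc]
      _ = U * (N ^ k * N) * V := by rw [hVU]; simp only [Matrix.mul_assoc, Matrix.mul_one]

lemma aeval_conj {α : Type*} [Fintype α] [DecidableEq α]
    {U V N : Matrix α α ℂ} (hVU : V * U = 1) (q : Polynomial ℂ) :
    Polynomial.aeval (U * N * V) q = U * Polynomial.aeval N q * V := by
  induction q using Polynomial.induction_on' with
  | add f g hf hg => simp only [map_add, hf, hg, Matrix.mul_add, Matrix.add_mul]
  | monomial k a =>
    rw [Polynomial.aeval_monomial, Polynomial.aeval_monomial, mconj_pow hVU,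
      Algebra.algebraMap_eq_smul_one, smul_mul_assoc, one_mul, smul_mul_assoc, one_mul,
      Matrix.mul_smul, Matrix.smul_mul]

/-- `bcirc (f(A)) = f (bcirc A)`, and the T-function is computed
blockwise in the Fourier block diagonalization. -/
theorem bcirc_tfun {n p : ℕ} [NeZero p]
    (A D : Fin p → Matrix (Fin n) (Fin n) ℂ)
    (h : bcirc A = ((fourierMat p)ᴴ ⊗ₖ (1 : Matrix (Fin n) (Fin n) ℂ)) * bdiag D *
        (fourierMat p ⊗ₖ (1 : Matrix (Fin n) (Fin n) ℂ)))
    (q : Polynomial ℂ) :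
    bcirc (tfun q A) = ((fourierMat p)ᴴ ⊗ₖ (1 : Matrix (Fin n) (Fin n) ℂ)) *
        bdiag (fun i => Polynomial.aeval (D i) q) *
        (fourierMat p ⊗ₖ (1 : Matrix (Fin n) (Fin n) ℂ)) ∧
      bcirc (tfun q A) = Polynomial.aeval (bcirc A) q := by
  have h1 : (fourierMat p ⊗ₖ (1 : Matrix (Fin n) (Fin n) ℂ)) *
      ((fourierMat p)ᴴ ⊗ₖ (1 : Matrix (Fin n) (Fin n) ℂ)) = 1 := by
    rw [← Matrix.mul_kronecker_mul, fourier_mul_conjT, Matrix.mul_one, Matrix.one_kronecker_one]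
  have part1 : Polynomial.aeval (bcirc A) q =
      ((fourierMat p)ᴴ ⊗ₖ (1 : Matrix (Fin n) (Fin n) ℂ)) *
        bdiag (fun i => Polynomial.aeval (D i) q) *
        (fourierMat p ⊗ₖ (1 : Matrix (Fin n) (Fin n) ℂ)) := by
    rw [h, aeval_conj h1, aeval_bdiag]
  have h2 : bcirc (tfun q A) = Polynomial.aeval (bcirc A) q :=
    bcirc_tfold ((isBC_bcirc A).aeval q)
  exact ⟨h2.trans part1, h2⟩

end
end

section
/- Let A ∈ C^{n×n×p} be a complex tensor and let f(z) = Σ_{k=0}^∞ aₖ z^k be a complex power series with convergence radius ρ. If every T-eigenvalue λ of A satisfies |λ| < ρ, then the tensor power series Σ_{k=0}^∞ aₖ A^k converges, and the T-eigenvalues of the limit are Σ_{k=0}^∞ aₖ λ^k for each T-eigenvalue λ of A. -/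
open Matrix Kronecker Complex Polynomial

noncomputable section

section Aux

open Filter Topology
open scoped NNReal ENNReal

variable {ι : Type*} [Fintype ι] [DecidableEq ι]

/-- bcirc of tmul is product of bcircs. -/
lemma bcirc_tmul {n p : ℕ} [NeZero p] (A B : Fin p → Matrix (Fin n) (Fin n) ℂ) :
    bcirc (tmul A B) = bcirc A * bcirc B := by
  ext ⟨j, r⟩ ⟨k, c⟩
  simp only [bcirc, tmul, Matrix.mul_apply, Matrix.of_apply, Matrix.sum_apply,
    Fintype.sum_prod_type]
  refine Fintype.sum_equiv (Equiv.addRight k) _ _ fun x => ?_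
  simp only [Equiv.coe_addRight, add_sub_cancel_right]
  congr 1
  ext y
  rw [sub_sub, add_comm k x]

lemma bcirc_tId {n p : ℕ} [NeZero p] : bcirc (tId (n := n) (p := p)) = 1 := by
  ext ⟨j, r⟩ ⟨k, c⟩
  simp only [bcirc, tId, Matrix.of_apply, sub_eq_zero]
  rcases eq_or_ne j k with rfl | hjk
  · simp [Matrix.one_apply, Prod.ext_iff]
  · simp [if_neg hjk, Matrix.one_apply, Prod.ext_iff, hjk]

lemma bcirc_tpow {n p : ℕ} [NeZero p] (A : Fin p → Matrix (Fin n) (Fin n) ℂ) (k : ℕ) :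
    bcirc (tpow A k) = (bcirc A) ^ k := by
  induction k with
  | zero => simpa [tpow] using bcirc_tId
  | succ k ih => rw [tpow, bcirc_tmul, ih, pow_succ]

lemma tpow_entry {n p : ℕ} [NeZero p] (A : Fin p → Matrix (Fin n) (Fin n) ℂ) (k : ℕ)
    (i : Fin p) (r c : Fin n) :
    tpow A k i r c = ((bcirc A) ^ k) (i, r) ((0 : Fin p), c) := by
  rw [← bcirc_tpow]; simp [bcirc]

section Norm

attribute [local instance] Matrix.linftyOpNormedRing Matrix.linftyOpNormedAlgebra

lemma entry_nnnorm_le (M : Matrix ι ι ℂ) (i j : ι) : ‖M i j‖₊ ≤ ‖M‖₊ := by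
  rw [Matrix.linfty_opNNNorm_def]
  exact le_trans
    (Finset.single_le_sum (f := fun j => ‖M i j‖₊) (fun _ _ => zero_le) (Finset.mem_univ j))
    (Finset.le_sup (f := fun i => ∑ j, ‖M i j‖₊) (Finset.mem_univ i))

lemma aux_entry_summable (M : Matrix ι ι ℂ) (a : ℕ → ℂ) (ρ : ℝ)
    (hρ : ∀ z : ℂ, ‖z‖ < ρ → Summable fun k => a k * z ^ k)
    (hspec : ∀ μ ∈ spectrum ℂ M, ‖μ‖ < ρ) (i j : ι) :
    Summable fun k => a k * (M ^ k) i j := by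
  haveI : Nonempty ι := ⟨i⟩
  have hne := spectrum.nonempty_of_isAlgClosed_of_finiteDimensional ℂ M
  obtain ⟨μ₀, hμ₀, hmax⟩ := spectrum.exists_nnnorm_eq_spectralRadius_of_nonempty hne
  obtain ⟨t, ht1, ht2⟩ := exists_between (hspec _ hμ₀)
  have ht0 : 0 ≤ t := le_trans (norm_nonneg _) ht1.le
  set r : ℝ≥0 := ⟨t, ht0⟩ with hr
  have hsr : spectralRadius ℂ M < (r : ℝ≥0∞) := by
    rw [← hmax]
    exact_mod_cast ht1
  have hgel := spectrum.pow_nnnorm_pow_one_div_tendsto_nhds_spectralRadius M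
  have hev : ∀ᶠ k : ℕ in atTop, (‖M ^ k‖₊ : ℝ≥0∞) ^ (1 / (k : ℝ)) < (r : ℝ≥0∞) :=
    hgel.eventually_lt_const hsr
  have hbound : ∀ᶠ k : ℕ in atTop, ‖a k * (M ^ k) i j‖ ≤ ‖a k * ((t : ℂ)) ^ k‖ := by
    filter_upwards [hev, Filter.eventually_ge_atTop 1] with k hk hk1
    have hk0 : (k : ℝ) ≠ 0 := by positivity
    have h1 : (‖M ^ k‖₊ : ℝ≥0∞) < (r : ℝ≥0∞) ^ k := by
      have h := ENNReal.rpow_lt_rpow hk (by positivity : (0:ℝ) < (k:ℝ))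
      rw [← ENNReal.rpow_mul, one_div, inv_mul_cancel₀ hk0, ENNReal.rpow_one] at h
      rw [← ENNReal.rpow_natCast ((r : ℝ≥0∞)) k]
      exact h
    have h2 : ‖M ^ k‖ ≤ t ^ k := by
      have : ‖M ^ k‖₊ ≤ r ^ k := by
        exact_mod_cast (ENNReal.coe_le_coe.1 (by exact_mod_cast h1.le))
      calc ‖M ^ k‖ = ((‖M ^ k‖₊ : ℝ)) := rfl
        _ ≤ ((r ^ k : ℝ≥0) : ℝ) := by exact_mod_cast this
        _ = t ^ k := by push_cast [hr]; rfl
    have h3 : ‖(M ^ k) i j‖ ≤ ‖M ^ k‖ := entry_nnnorm_le (M ^ k) i j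
    rw [norm_mul, norm_mul, norm_pow]
    have : ‖(t : ℂ)‖ = t := by simp [Complex.norm_real, Real.norm_eq_abs, _root_.abs_of_nonneg ht0]
    rw [this]
    exact mul_le_mul_of_nonneg_left (h3.trans h2) (norm_nonneg _)
  have hsummx : Summable fun k => a k * ((t : ℂ)) ^ k := by
    apply hρ
    simpa [Complex.norm_real, Real.norm_eq_abs, _root_.abs_of_nonneg ht0] using ht2
  exact Summable.of_norm_bounded_eventually (summable_norm_iff.2 hsummx)
    (by simpa [Nat.cofinite_eq_atTop] using hbound)

end Norm

lemma hasSum_matrix (M : Matrix ι ι ℂ) (a : ℕ → ℂ)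
    (hent : ∀ i j, Summable fun k => a k * (M ^ k) i j) :
    HasSum (fun k => a k • M ^ k)
      (Matrix.of fun i j => ∑' k, a k * (M ^ k) i j) := by
  refine Pi.hasSum.2 fun i => Pi.hasSum.2 fun j => ?_
  simpa [Matrix.smul_apply, smul_eq_mul] using (hent i j).hasSum

lemma det_algebraMap_sub (B : Matrix ι ι ℂ) (z : ℂ) :
    (algebraMap ℂ (Matrix ι ι ℂ) z - B).det = B.charpoly.eval z := by
  rw [Matrix.charpoly, eval_det, Matrix.matPolyEquiv_charmatrix]
  simp [Matrix.scalar, Algebra.algebraMap_eq_smul_one]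

lemma mem_spectrum_iff_det (B : Matrix ι ι ℂ) (z : ℂ) :
    z ∈ spectrum ℂ B ↔ (algebraMap ℂ (Matrix ι ι ℂ) z - B).det = 0 := by
  rw [spectrum.mem_iff, Matrix.isUnit_iff_isUnit_det, isUnit_iff_ne_zero, not_ne_iff]

lemma mem_spectrum_of_root (B : Matrix ι ι ℂ) (z : ℂ) (h : B.charpoly.IsRoot z) :
    z ∈ spectrum ℂ B := (mem_spectrum_iff_det B z).2 (by rw [det_algebraMap_sub]; exact h)

lemma exists_eigvec (M : Matrix ι ι ℂ) (lam : ℂ) (h : lam ∈ spectrum ℂ M) :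
    ∃ v : ι → ℂ, v ≠ 0 ∧ M *ᵥ v = lam • v := by
  obtain ⟨v, hv0, hv⟩ := Matrix.exists_mulVec_eq_zero_iff.2 ((mem_spectrum_iff_det M lam).1 h)
  refine ⟨v, hv0, ?_⟩
  rw [Matrix.sub_mulVec, Algebra.algebraMap_eq_smul_one, Matrix.smul_mulVec,
    Matrix.one_mulVec, sub_eq_zero] at hv
  exact hv.symm

lemma spectrum_tsum (M : Matrix ι ι ℂ) (a : ℕ → ℂ) (ρ : ℝ)
    (hρ : ∀ z : ℂ, ‖z‖ < ρ → Summable fun k => a k * z ^ k)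
    (hspec : ∀ μ ∈ spectrum ℂ M, ‖μ‖ < ρ) :
    spectrum ℂ (∑' k : ℕ, a k • M ^ k) =
      (fun μ => ∑' k : ℕ, a k * μ ^ k) '' spectrum ℂ M := by
  have hent := aux_entry_summable M a ρ hρ hspec
  have hS := hasSum_matrix M a hent
  have htsum : (∑' k : ℕ, a k • M ^ k) = Matrix.of fun i j => ∑' k, a k * (M ^ k) i j :=
    hS.tsum_eq
  have hsc : ∀ lam ∈ spectrum ℂ M, Summable fun k => a k * lam ^ k :=
    fun lam hl => hρ _ (hspec _ hl)
  apply Set.Subset.antisymm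
  · intro μ hμ
    by_contra hnot
    cases isEmpty_or_nonempty ι with
    | inl hempty =>
      haveI : Subsingleton (Matrix ι ι ℂ) := ⟨fun x y => by ext i j; exact (IsEmpty.false i).elim⟩
      exact spectrum.mem_iff.1 hμ (isUnit_of_subsingleton _)
    | inr hne' =>
      have hfin : (spectrum ℂ M).Finite := M.finite_spectrum
      have hne : (spectrum ℂ M).Nonempty :=
        spectrum.nonempty_of_isAlgClosed_of_finiteDimensional ℂ M
      set T : Finset ℂ := hfin.toFinset with hT
      have hTne : T.Nonempty := (Set.Finite.toFinset_nonempty hfin).2 hne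
      set g : ℂ → ℂ := fun lam => ∑' k, a k * lam ^ k with hg
      have hδ0 : 0 < T.inf' hTne fun lam => ‖μ - g lam‖ := by
        rw [Finset.lt_inf'_iff]
        intro lam hlam
        have hnel : μ ≠ g lam := fun hEq => hnot ⟨lam, (hfin.mem_toFinset).1 hlam, hEq.symm⟩
        exact norm_sub_pos_iff.2 hnel
      set δ : ℝ := T.inf' hTne fun lam => ‖μ - g lam‖ with hδ
      have hδle : ∀ lam ∈ spectrum ℂ M, δ ≤ ‖μ - g lam‖ :=
        fun lam hlam => Finset.inf'_le _ ((hfin.mem_toFinset).2 hlam)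
      set q : ℕ → ℂ[X] := fun m => C μ - ∑ k ∈ Finset.range m, C (a k) * X ^ k with hq
      have haev : ∀ m, aeval M (q m) =
          algebraMap ℂ (Matrix ι ι ℂ) μ - ∑ k ∈ Finset.range m, a k • M ^ k := by
        intro m
        simp only [hq]
        rw [map_sub, map_sum, aeval_C]
        congr 1
        refine Finset.sum_congr rfl fun k _ => ?_
        rw [_root_.map_mul, aeval_C, map_pow, aeval_X, Algebra.smul_def]
      have heval : ∀ m lam, eval lam (q m) = μ - ∑ k ∈ Finset.range m, a k * lam ^ k := by
        intro m lam; simp [hq, eval_finset_sum]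
      have hev : ∀ᶠ m in atTop, ∀ lam ∈ T, δ / 2 ≤ ‖eval lam (q m)‖ := by
        rw [Filter.eventually_all_finset]
        intro lam hlam
        have hsum : Summable fun k => a k * lam ^ k := hsc lam ((hfin.mem_toFinset).1 hlam)
        have ht : Tendsto (fun m => ‖eval lam (q m)‖) atTop (𝓝 ‖μ - g lam‖) := by
          have h2 : Tendsto (fun m => μ - ∑ k ∈ Finset.range m, a k * lam ^ k) atTop
              (𝓝 (μ - g lam)) := tendsto_const_nhds.sub hsum.hasSum.tendsto_sum_nat
          simpa [heval] using h2.norm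
        have hlt : δ / 2 < ‖μ - g lam‖ :=
          lt_of_lt_of_le (by linarith) (hδle lam ((hfin.mem_toFinset).1 hlam))
        exact (ht.eventually_const_lt hlt).mono fun m hm => hm.le
      set N := Fintype.card ι with hN
      have hdetb : ∀ᶠ m in atTop, (δ / 2) ^ N ≤
          ‖(algebraMap ℂ (Matrix ι ι ℂ) μ - ∑ k ∈ Finset.range m, a k • M ^ k).det‖ := by
        filter_upwards [hev] with m hm
        rw [← haev]
        set B := aeval M (q m) with hB
        have hspecB : spectrum ℂ B = (fun lam => eval lam (q m)) '' spectrum ℂ M :=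
          spectrum.map_polynomial_aeval_of_nonempty M (q m) hne
        have hroots : ∀ r ∈ B.charpoly.roots, Real.toNNReal (δ / 2) ≤ ‖r‖₊ := by
          intro r hr
          have hrr : r ∈ spectrum ℂ B := mem_spectrum_of_root _ _ (isRoot_of_mem_roots hr)
          rw [hspecB] at hrr
          obtain ⟨lam, hlam, rfl⟩ := hrr
          exact Real.toNNReal_le_iff_le_coe.2 (hm lam ((hfin.mem_toFinset).2 hlam))
        have hcard : Multiset.card B.charpoly.roots = N := by
          rw [hN, ← Matrix.charpoly_natDegree_eq_dim B]
          exact Polynomial.splits_iff_card_roots.1 (IsAlgClosed.splits _)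
        have hdet : B.det = B.charpoly.roots.prod := Matrix.det_eq_prod_roots_charpoly B
        have hnn : Real.toNNReal (δ / 2) ^ N ≤ ‖B.det‖₊ := by
          have hprod : ‖B.charpoly.roots.prod‖₊ = (B.charpoly.roots.map (‖·‖₊)).prod :=
            (Multiset.prod_hom B.charpoly.roots (nnnormHom (α := ℂ))).symm
          rw [hdet, hprod]
          have := Multiset.pow_card_le_prod
            (s := B.charpoly.roots.map (‖·‖₊)) (a := Real.toNNReal (δ / 2))
            (by intro x hx
                obtain ⟨r, hr, rfl⟩ := Multiset.mem_map.1 hx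
                exact hroots r hr)
          rwa [Multiset.card_map, hcard] at this
        calc (δ / 2) ^ N = ((Real.toNNReal (δ / 2) ^ N : NNReal) : ℝ) := by
              rw [NNReal.coe_pow, Real.coe_toNNReal _ (by linarith)]
          _ ≤ ‖B.det‖ := by exact_mod_cast hnn
      have h1 : Tendsto (fun m => ∑ k ∈ Finset.range m, a k • M ^ k) atTop
          (𝓝 (∑' k : ℕ, a k • M ^ k)) := by
        rw [htsum]; exact hS.tendsto_sum_nat
      have hdet_t : Tendsto
          (fun m => ‖(algebraMap ℂ (Matrix ι ι ℂ) μ - ∑ k ∈ Finset.range m, a k • M ^ k).det‖)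
          atTop (𝓝 ‖(algebraMap ℂ (Matrix ι ι ℂ) μ - ∑' k : ℕ, a k • M ^ k).det‖) := by
        have h2 := (tendsto_const_nhds (x := algebraMap ℂ (Matrix ι ι ℂ) μ)
          (f := atTop (α := ℕ))).sub h1
        exact (((Continuous.matrix_det continuous_id).tendsto _).comp h2).norm
      have hfinal : (δ / 2) ^ N ≤
          ‖(algebraMap ℂ (Matrix ι ι ℂ) μ - ∑' k : ℕ, a k • M ^ k).det‖ :=
        ge_of_tendsto hdet_t hdetb
      have hdne : (algebraMap ℂ (Matrix ι ι ℂ) μ - ∑' k : ℕ, a k • M ^ k).det ≠ 0 := by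
        intro h0; rw [h0, norm_zero] at hfinal
        exact absurd hfinal (not_le.2 (pow_pos (by linarith) N))
      exact hdne ((mem_spectrum_iff_det _ _).1 hμ)
  · rintro _ ⟨lam, hlam, rfl⟩
    obtain ⟨v, hv0, hv⟩ := exists_eigvec M lam hlam
    have hpow : ∀ k : ℕ, (M ^ k) *ᵥ v = (lam ^ k) • v := by
      intro k; induction k with
      | zero => simp
      | succ k ih =>
        rw [pow_succ', ← Matrix.mulVec_mulVec, ih, Matrix.mulVec_smul, hv, smul_smul,
          ← pow_succ]
    have hSv : (∑' k : ℕ, a k • M ^ k) *ᵥ v = (∑' k, a k * lam ^ k) • v := by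
      funext i
      have e1 : ((∑' k : ℕ, a k • M ^ k) *ᵥ v) i
          = ∑ j, (∑' k, a k * (M ^ k) i j) * v j := by
        rw [htsum]; simp [Matrix.mulVec, dotProduct]
      rw [e1]
      have e2 : ∀ j, (∑' k, a k * (M ^ k) i j) * v j = ∑' k, a k * (M ^ k) i j * v j :=
        fun j => (tsum_mul_right).symm
      simp only [e2]
      rw [← Summable.tsum_finsetSum (fun j _ => (hent i j).mul_right (v j))]
      have e3 : ∀ k : ℕ, (∑ j, a k * (M ^ k) i j * v j) = a k * lam ^ k * v i := by
        intro k
        have : (∑ j, (M ^ k) i j * v j) = ((M ^ k) *ᵥ v) i := by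
          simp [Matrix.mulVec, dotProduct]
        calc (∑ j, a k * (M ^ k) i j * v j) = a k * ∑ j, (M ^ k) i j * v j := by
              rw [Finset.mul_sum]; congr 1; ext j; ring
          _ = a k * (lam ^ k * v i) := by rw [this, hpow]; simp
          _ = a k * lam ^ k * v i := by ring
      simp only [e3]
      rw [tsum_mul_right]
      simp
    apply (mem_spectrum_iff_det _ _).2
    apply Matrix.exists_mulVec_eq_zero_iff.1
    refine ⟨v, hv0, ?_⟩
    rw [Matrix.sub_mulVec, hSv, Algebra.algebraMap_eq_smul_one, Matrix.smul_mulVec,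
      Matrix.one_mulVec, sub_self]

end Aux

/-- tensor power series convergence: if every T-eigenvalue of `A`
lies strictly inside the convergence radius of `Σ aₖ z^k`, then the tensor power
series converges and the T-eigenvalues of the limit are `Σ aₖ λ^k`. -/
theorem tensor_power_series_convergence {n p : ℕ} [NeZero p]
    (A : Fin p → Matrix (Fin n) (Fin n) ℂ) (a : ℕ → ℂ) (ρ : ℝ)
    (hρ : ∀ z : ℂ, ‖z‖ < ρ → Summable fun k => a k * z ^ k)
    (hspec : ∀ μ ∈ spectrum ℂ (bcirc A), ‖μ‖ < ρ) :
    (Summable fun k => a k • tpow A k) ∧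
      (Summable fun k => a k • (bcirc A) ^ k) ∧
      spectrum ℂ (∑' k : ℕ, a k • (bcirc A) ^ k) =
        (fun μ => ∑' k : ℕ, a k * μ ^ k) '' spectrum ℂ (bcirc A) := by
  have hent := fun i j => aux_entry_summable (bcirc A) a ρ hρ hspec i j
  have hS := hasSum_matrix (bcirc A) a hent
  refine ⟨?_, ⟨_, hS⟩, spectrum_tsum (bcirc A) a ρ hρ hspec⟩
  refine ⟨(fun i => Matrix.of fun r c => ∑' k, a k * ((bcirc A) ^ k) (i, r) ((0 : Fin p), c)), ?_⟩
  refine Pi.hasSum.2 fun i => Pi.hasSum.2 fun r => Pi.hasSum.2 fun c => ?_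
  have h := (hent (i, r) ((0 : Fin p), c)).hasSum
  simpa [tpow_entry, Pi.smul_apply, Matrix.smul_apply, smul_eq_mul, Matrix.of_apply] using h

end
end

section
/- For every invertible tensor A ∈ C^{n×n×p}, the tensor equation exp(X) = A has a solution X ∈ C^{n×n×p}; moreover, if X is a solution then X + 2kπi·I is also a solution for every integer k. -/
open Matrix Kronecker Complex Polynomial

noncomputable section

/-- The tensor exponential T-function: `exp(A) = fold (exp(bcirc A) · Ê₁)`. -/
def texp {n p : ℕ} [NeZero p] (A : Fin p → Matrix (Fin n) (Fin n) ℂ) :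
    Fin p → Matrix (Fin n) (Fin n) ℂ :=
  tfold (NormedSpace.exp (bcirc A))

namespace TLog


/-- truncated log series -/
def Lp (r : ℕ) : ℂ[X] := ∑ j ∈ Finset.range r, C ((-1 : ℂ)^j / (j+1)) * X^(j+1)

/-- truncated exp of Lp -/
def Fp (r : ℕ) : ℂ[X] := ∑ i ∈ Finset.range (r+1), C ((i.factorial : ℂ)⁻¹) * (Lp r)^i

lemma X_dvd_Lp (r : ℕ) : (X : ℂ[X]) ∣ Lp r := by
  refine Finset.dvd_sum fun j _ => Dvd.dvd.mul_left (dvd_pow_self _ (Nat.succ_ne_zero j)) _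

lemma derivative_Lp (r : ℕ) : derivative (Lp r) = ∑ j ∈ Finset.range r, (-X : ℂ[X])^j := by
  rw [Lp, _root_.map_sum]
  refine Finset.sum_congr rfl fun j _ => ?_
  have h1 : ((j : ℂ) + 1) ≠ 0 := by exact_mod_cast Nat.succ_ne_zero j
  rw [derivative_C_mul, derivative_X_pow, Nat.add_sub_cancel, neg_pow, ← mul_assoc, ← C_mul,
    Nat.cast_add, Nat.cast_one, div_mul_cancel₀ _ h1]
  rw [one_pow, mul_one, _root_.map_pow, map_neg, C_1, ← neg_pow]
lemma one_add_X_mul_derivative_Lp (r : ℕ) :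
    (1 + X) * derivative (Lp r) = 1 - (-X : ℂ[X])^r := by
  rw [derivative_Lp]
  linear_combination (-1 : ℂ[X]) * geom_sum_mul (-X : ℂ[X]) r

lemma derivative_Fp (r : ℕ) :
    derivative (Fp r) =
      (Fp r - C ((r.factorial : ℂ)⁻¹) * (Lp r)^r) * derivative (Lp r) := by
  have key : derivative (Fp r)
      = ∑ i ∈ Finset.range r, C ((i.factorial : ℂ)⁻¹) * (Lp r)^i * derivative (Lp r) := by
    rw [Fp, _root_.map_sum, Finset.sum_range_succ']
    have h0 : derivative (C ((Nat.factorial 0 : ℂ)⁻¹) * Lp r ^ 0) = 0 := by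
      simp
    rw [h0, add_zero]
    refine Finset.sum_congr rfl fun i _ => ?_
    rw [derivative_C_mul, derivative_pow]
    have hfac : ((i+1).factorial : ℂ)⁻¹ * ((i : ℂ) + 1) = ((i.factorial : ℂ)⁻¹) := by
      rw [Nat.factorial_succ]
      push_cast
      have h1 : ((i : ℂ) + 1) ≠ 0 := by exact_mod_cast Nat.succ_ne_zero i
      have h2 : ((i.factorial : ℂ)) ≠ 0 := by exact_mod_cast Nat.factorial_ne_zero i
      field_simp
    rw [← mul_assoc, ← mul_assoc, ← C_mul]
    push_cast
    rw [hfac]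
  rw [key, Fp, Finset.sum_range_succ, ← Finset.sum_mul]
  congr 1
  ring
lemma coeff_Fp_zero (r : ℕ) : (Fp r).coeff 0 = 1 := by
  obtain ⟨T, hT⟩ := X_dvd_Lp r
  rw [Fp, finset_sum_coeff]
  rw [Finset.sum_eq_single 0]
  · simp
  · intro i _ hi
    rw [hT, mul_pow, coeff_C_mul]
    have hx : (X : ℂ[X]) ∣ X^i * T^i := Dvd.dvd.mul_right (dvd_pow_self X hi) _
    rw [X_dvd_iff.mp hx, mul_zero]
  · simp
lemma coeff_Fp (r : ℕ) : ∀ d, d ≤ r → (Fp r).coeff d = if d = 0 ∨ d = 1 then 1 else 0 := by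
  obtain ⟨T, hT⟩ := X_dvd_Lp r
  have key : (1 + X) * derivative (Fp r)
      = (Fp r - C ((r.factorial : ℂ)⁻¹) * (Lp r)^r) * (1 - (-X : ℂ[X])^r) := by
    rw [derivative_Fp, ← one_add_X_mul_derivative_Lp]
    ring
  have hco : ∀ d, d < r → (Fp r).coeff (d+1) * ((d : ℂ)+1) + ((X : ℂ[X]) * derivative (Fp r)).coeff d
      = (Fp r).coeff d := by
    intro d hd
    have h1 := congrArg (fun q => Polynomial.coeff q d) key
    rw [add_mul, one_mul, coeff_add, coeff_derivative] at h1
    have hdvd1 : (X : ℂ[X])^r ∣ C ((r.factorial : ℂ)⁻¹) * (Lp r)^r := by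
      refine Dvd.dvd.mul_left ?_ _
      rw [hT, mul_pow]
      exact Dvd.dvd.mul_right dvd_rfl _
    have hdvd2 : (X : ℂ[X])^r ∣ (Fp r - C ((r.factorial : ℂ)⁻¹) * (Lp r)^r) * (-X : ℂ[X])^r := by
      refine Dvd.dvd.mul_left ?_ _
      rw [neg_pow]
      exact Dvd.dvd.mul_left dvd_rfl _
    rw [mul_sub, mul_one, coeff_sub, coeff_sub, X_pow_dvd_iff.mp hdvd1 d hd,
      X_pow_dvd_iff.mp hdvd2 d hd, sub_zero, sub_zero] at h1
    exact h1
  intro d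
  induction d using Nat.strong_induction_on with
  | _ d IH =>
    intro hdr
    match d, hdr with
    | 0, hdr => simpa using coeff_Fp_zero r
    | 1, hdr =>
      have h := hco 0 (by omega)
      have h0 : ((X : ℂ[X]) * derivative (Fp r)).coeff 0 = 0 := by
        rw [mul_comm, coeff_mul_X_zero]
      rw [h0, add_zero, coeff_Fp_zero r] at h
      push_cast at h
      simpa using h
    | (e+2), hdr =>
      have h := hco (e+1) (by omega)
      have hx : ((X : ℂ[X]) * derivative (Fp r)).coeff (e+1)
          = (Fp r).coeff (e+1) * ((e : ℂ)+1) := by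
        rw [mul_comm, coeff_mul_X, coeff_derivative]
      rw [hx] at h
      have he1 : (Fp r).coeff (e+1) = if e+1 = 0 ∨ e+1 = 1 then 1 else 0 :=
        IH (e+1) (by omega) (by omega)
      match e with
      | 0 =>
        rw [he1] at h
        norm_num at h
        simpa using h
      | (e'+1) =>
        rw [he1] at h
        simp only [show ¬(e'+1+1 = 0 ∨ e'+1+1 = 1) by omega, if_false, zero_mul, add_zero,
          mul_zero] at h
        have hne : ((e'+1+1 : ℕ) : ℂ) + 1 ≠ 0 := by
          exact_mod_cast (show ((e'+1+1+1 : ℕ)) ≠ 0 by omega)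
        rcases mul_eq_zero.mp h with h' | h'
        · simp only [show ¬(e'+1+2 = 0 ∨ e'+1+2 = 1) by omega, if_false]
          exact h'
        · exact absurd h' hne

lemma Fp_eq (r : ℕ) : ∃ G : ℂ[X], Fp r = 1 + X + X^(r+1) * G := by
  have hdvd : (X : ℂ[X])^(r+1) ∣ Fp r - (1 + X) := by
    rw [X_pow_dvd_iff]
    intro d hd
    rw [coeff_sub, coeff_Fp r d (by omega), coeff_add, coeff_one, coeff_X]
    rcases d with _ | _ | d <;> norm_num
  obtain ⟨G, hG⟩ := hdvd
  exact ⟨G, by linear_combination hG⟩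

lemma commute_aeval_right {A : Type*} [Ring A] [Algebra ℂ A] {a b : A} (h : Commute a b)
    (q : ℂ[X]) : Commute a (Polynomial.aeval b q) := by
  induction q using Polynomial.induction_on' with
  | add p q hp hq => simpa [_root_.map_add] using hp.add_right hq
  | monomial n c =>
    rw [Polynomial.aeval_monomial]
    exact (Algebra.commute_algebraMap_right _ _).mul_right (h.pow_right n)

lemma commute_aeval {A : Type*} [Ring A] [Algebra ℂ A] {a b : A} (h : Commute a b)
    (p q : ℂ[X]) : Commute (Polynomial.aeval a p) (Polynomial.aeval b q) :=
  commute_aeval_right ((commute_aeval_right h.symm p).symm) q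

lemma exp_aeval_Lp {m : Type*} [Fintype m] [DecidableEq m] {r : ℕ} (k : Matrix m m ℂ) (hk : k ^ r = 0) :
    NormedSpace.exp (Polynomial.aeval k (Lp r)) = 1 + k := by
  letI : SeminormedRing (Matrix m m ℂ) := Matrix.linftyOpSemiNormedRing
  letI : NormedRing (Matrix m m ℂ) := Matrix.linftyOpNormedRing
  letI : NormedAlgebra ℂ (Matrix m m ℂ) := Matrix.linftyOpNormedAlgebra
  set l := Polynomial.aeval k (Lp r) with hl
  obtain ⟨T, hT⟩ := X_dvd_Lp r
  have hcomm : Commute k (Polynomial.aeval k T) := commute_aeval_right (Commute.refl k) T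
  have hlmul : l = k * Polynomial.aeval k T := by
    rw [hl, hT, _root_.map_mul, Polynomial.aeval_X]
  have hkr1 : k ^ (r+1) = 0 := by rw [pow_succ, hk, zero_mul]
  have hlpow : ∀ i, r ≤ i → l ^ i = 0 := by
    intro i hi
    rw [hlmul, hcomm.mul_pow, show k ^ i = k ^ r * k ^ (i - r) by
      rw [← pow_add]; congr 1; omega, hk, zero_mul, zero_mul]
  have hexp : NormedSpace.exp l = ∑' (n : ℕ), ((n.factorial : ℂ))⁻¹ • l ^ n := by
    rw [NormedSpace.exp_eq_tsum ℂ]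
  rw [hexp, tsum_eq_sum (s := Finset.range (r+1)) (by
    intro b hb
    rw [hlpow b (by simp only [Finset.mem_range] at hb; omega), smul_zero])]
  have haev : ∀ n ∈ Finset.range (r+1), ((n.factorial : ℂ))⁻¹ • l ^ n
      = Polynomial.aeval k (C ((n.factorial : ℂ)⁻¹) * (Lp r)^n) := by
    intro n _
    rw [_root_.map_mul, Polynomial.aeval_C, _root_.map_pow, ← hl, ← Algebra.smul_def]
  rw [Finset.sum_congr rfl haev, ← _root_.map_sum]
  obtain ⟨G, hG⟩ := Fp_eq r
  rw [show (∑ n ∈ Finset.range (r+1), C ((n.factorial : ℂ)⁻¹) * Lp r ^ n) = Fp r from rfl, hG]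
  rw [_root_.map_add, _root_.map_add, _root_.map_one, Polynomial.aeval_X, _root_.map_mul, _root_.map_pow, Polynomial.aeval_X,
    hkr1, zero_mul, add_zero]



lemma mulVec_pow_eig {m : Type*} [Fintype m] [DecidableEq m] {x : Matrix m m ℂ} {v : m → ℂ} {c : ℂ}
    (h : x.mulVec v = c • v) (i : ℕ) : (x ^ i).mulVec v = c ^ i • v := by
  induction i with
  | zero => simp [Matrix.one_mulVec]
  | succ i ih =>
    rw [pow_succ, ← Matrix.mulVec_mulVec, h, Matrix.mulVec_smul, ih, smul_smul, ← pow_succ']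

lemma mulVec_aeval_eig {m : Type*} [Fintype m] [DecidableEq m] {s : Matrix m m ℂ} {v : m → ℂ} {c : ℂ}
    (h : s.mulVec v = c • v) (p : ℂ[X]) :
    (Polynomial.aeval s p).mulVec v = p.eval c • v := by
  induction p using Polynomial.induction_on' with
  | add p q hp hq => rw [_root_.map_add, Matrix.add_mulVec, hp, hq, Polynomial.eval_add, add_smul]
  | monomial n a =>
    rw [Polynomial.aeval_monomial, Polynomial.eval_monomial, ← Algebra.smul_def,
      Matrix.smul_mulVec, mulVec_pow_eig h, smul_smul]

lemma mulVec_exp_eig {m : Type*} [Fintype m] [DecidableEq m] {x : Matrix m m ℂ} {v : m → ℂ} {c : ℂ}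
    (h : x.mulVec v = c • v) :
    (NormedSpace.exp x).mulVec v = Complex.exp c • v := by
  letI : SeminormedRing (Matrix m m ℂ) := Matrix.linftyOpSemiNormedRing
  letI : NormedRing (Matrix m m ℂ) := Matrix.linftyOpNormedRing
  letI : NormedAlgebra ℂ (Matrix m m ℂ) := Matrix.linftyOpNormedAlgebra
  have hsum : Summable (fun n : ℕ => ((n.factorial : ℂ))⁻¹ • x ^ n) :=
    NormedSpace.expSeries_summable' x
  let Tl : Matrix m m ℂ →ₗ[ℂ] (m → ℂ) :=
    { toFun := fun M => M.mulVec v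
      map_add' := fun M1 M2 => Matrix.add_mulVec M1 M2 v
      map_smul' := fun a M => Matrix.smul_mulVec a M v }
  let T := LinearMap.toContinuousLinearMap Tl
  have hT_apply : ∀ M : Matrix m m ℂ, T M = M.mulVec v := fun M => rfl
  have h1 : (NormedSpace.exp x).mulVec v = ∑' n : ℕ, T (((n.factorial : ℂ))⁻¹ • x ^ n) := by
    have e1 : NormedSpace.exp x = ∑' n : ℕ, ((n.factorial : ℂ))⁻¹ • x ^ n := by
      rw [NormedSpace.exp_eq_tsum ℂ]
    rw [e1, ← hT_apply]
    exact (T.map_tsum hsum)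
  have h2 : ∀ n : ℕ, T (((n.factorial : ℂ))⁻¹ • x ^ n) = (((n.factorial : ℂ))⁻¹ • c ^ n) • v := by
    intro n
    rw [hT_apply, Matrix.smul_mulVec, mulVec_pow_eig h, smul_smul, smul_eq_mul]
  rw [h1]
  simp_rw [h2]
  have hsumc : Summable (fun n : ℕ => ((n.factorial : ℂ))⁻¹ • c ^ n) :=
    NormedSpace.expSeries_summable' c
  let U : ℂ →L[ℂ] (m → ℂ) := (ContinuousLinearMap.id ℂ ℂ).smulRight v
  have h3 : ∑' n : ℕ, (((n.factorial : ℂ))⁻¹ • c ^ n) • v = (∑' n : ℕ, ((n.factorial : ℂ))⁻¹ • c ^ n) • v := by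
    exact (U.map_tsum hsumc).symm
  rw [h3]
  congr 1
  rw [Complex.exp_eq_exp_ℂ, NormedSpace.exp_eq_tsum ℂ]

lemma exists_exp_aeval_eq_of_semisimple {m : Type*} [Fintype m] [DecidableEq m] (s : Matrix m m ℂ)
    (hss : Module.End.IsSemisimple (R := ℂ) (M := m → ℂ) (Matrix.toLinAlgEquiv' s)) (hs : IsUnit s) :
    ∃ q : ℂ[X], NormedSpace.exp (Polynomial.aeval s q) = s := by
  set f : Module.End ℂ (m → ℂ) := Matrix.toLinAlgEquiv' s with hf
  have hm0 : minpoly ℂ f ≠ 0 := minpoly.ne_zero_of_finite ℂ f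
  set nodes := (minpoly ℂ f).roots.toFinset with hnodes
  set q := Lagrange.interpolate nodes id (fun z => Complex.log z) with hq
  refine ⟨q, ?_⟩
  set D := NormedSpace.exp (Polynomial.aeval s q) - s with hD
  have heq : ∀ μ : ℂ, Module.End.eigenspace f μ ≤ LinearMap.ker (Matrix.toLinAlgEquiv' D) := by
    intro μ v hv
    rw [Module.End.mem_eigenspace_iff] at hv
    rw [LinearMap.mem_ker, Matrix.toLinAlgEquiv'_apply]
    by_cases hv0 : v = 0
    · rw [hv0, Matrix.mulVec_zero]
    · have heig : f.HasEigenvalue μ :=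
        Module.End.hasEigenvalue_of_hasEigenvector
          ⟨Module.End.mem_eigenspace_iff.mpr hv, hv0⟩
      have hroot : (minpoly ℂ f).IsRoot μ := Module.End.hasEigenvalue_iff_isRoot.mp heig
      have hmem : μ ∈ nodes := by
        rw [hnodes, Multiset.mem_toFinset, Polynomial.mem_roots hm0]
        exact hroot
      have hsv : s.mulVec v = μ • v := by
        rw [← Matrix.toLinAlgEquiv'_apply]
        exact hv
      have hμ0 : μ ≠ 0 := by
        rintro rfl
        apply hv0
        obtain ⟨u, hu⟩ := hs
        have h1 : s.mulVec v = 0 := by rw [hsv, zero_smul]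
        have h2 : ((↑u⁻¹ : Matrix m m ℂ) * s).mulVec v = 0 := by
          rw [← Matrix.mulVec_mulVec, h1, Matrix.mulVec_zero]
        rwa [← hu, Units.inv_mul, Matrix.one_mulVec] at h2
      have h1 : (Polynomial.aeval s q).mulVec v = Complex.log μ • v := by
        rw [mulVec_aeval_eig hsv, hq]
        congr 1
        have := Lagrange.eval_interpolate_at_node (s := nodes) (v := id)
          (r := fun z => Complex.log z) (Set.injOn_id _) hmem
        simpa using this
      have h2 := mulVec_exp_eig h1
      rw [hD, Matrix.sub_mulVec, h2, hsv, Complex.exp_log hμ0, sub_self]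
  have htop : ⨆ μ, (Module.End.eigenspace f μ) = ⊤ := by
    have h1 := Module.End.iSup_maxGenEigenspace_eq_top f
    have h2 : ∀ μ, f.maxGenEigenspace μ = f.eigenspace μ :=
      hss.isFinitelySemisimple.maxGenEigenspace_eq_eigenspace
    rw [← h1]
    exact le_antisymm (iSup_mono fun μ => (h2 μ).symm.le) (iSup_mono fun μ => (h2 μ).le)
  have hker : LinearMap.ker (Matrix.toLinAlgEquiv' D) = ⊤ := by
    rw [eq_top_iff, ← htop]
    exact iSup_le heq
  have hD0 : Matrix.toLinAlgEquiv' D = 0 := LinearMap.ker_eq_top.mp hker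
  have : D = 0 := by
    apply (Matrix.toLinAlgEquiv' (n := m) (R := ℂ)).injective
    rw [hD0, _root_.map_zero]
  rw [← sub_eq_zero]
  exact this




lemma exists_log {m : Type*} [Fintype m] [DecidableEq m] (M : Matrix m m ℂ) (hM : IsUnit M) :
    ∃ L, NormedSpace.exp L = M ∧ ∀ W, Commute M W → Commute L W := by
  set e := (Matrix.toLinAlgEquiv' : Matrix m m ℂ ≃ₐ[ℂ] Module.End ℂ (m → ℂ))
    with he
  obtain ⟨n_e, hn_mem, s_e, hs_mem, hnil, hss, hsum⟩ :=
    Module.End.exists_isNilpotent_isSemisimple (f := e M)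
  rw [Algebra.adjoin_singleton_eq_range_aeval, AlgHom.mem_range] at hn_mem hs_mem
  obtain ⟨pn, hpn⟩ := hn_mem
  obtain ⟨ps, hps⟩ := hs_mem
  set nm := Polynomial.aeval M pn with hnm_def
  set sm := Polynomial.aeval M ps with hsm_def
  have henm : e nm = n_e := by rw [hnm_def, ← Polynomial.aeval_algHom_apply]; exact hpn
  have hesm : e sm = s_e := by rw [hsm_def, ← Polynomial.aeval_algHom_apply]; exact hps
  have comm_MM : ∀ p q : ℂ[X], Commute (Polynomial.aeval M p) (Polynomial.aeval M q) :=
    fun p q => commute_aeval (Commute.refl M) p q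
  have hnmsm : Commute nm sm := comm_MM pn ps
  have hMsum : M = nm + sm := by
    apply e.injective
    rw [_root_.map_add, henm, hesm, hsum]
  obtain ⟨r, hr⟩ : ∃ r, nm ^ r = 0 := by
    obtain ⟨r, hr⟩ := hnil
    exact ⟨r, e.injective (by rw [_root_.map_pow, henm, hr, _root_.map_zero])⟩
  have hsm_unit : IsUnit sm := by
    have h1 : IsUnit (M + (-nm)) := by
      refine IsNilpotent.isUnit_add_left_of_commute ⟨r, by rw [neg_pow, hr, mul_zero]⟩ hM ?_
      have : Commute nm M := by
        have := commute_aeval (Commute.refl M) pn X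
        rwa [Polynomial.aeval_X] at this
      exact this.neg_left
    have h2 : sm = M + (-nm) := by rw [hMsum]; abel
    rwa [← h2] at h1
  set u := hsm_unit.unit with hu_def
  have hu_spec : (↑u : Matrix m m ℂ) = sm := hsm_unit.unit_spec
  have c1 : Commute nm (↑u : Matrix m m ℂ) := by rw [hu_spec]; exact hnmsm
  have c2 : Commute nm (↑u⁻¹ : Matrix m m ℂ) := c1.units_inv_right
  set k := (↑u⁻¹ : Matrix m m ℂ) * nm with hk_def
  have hk_pow : k ^ r = 0 := by
    rw [hk_def, (c2.symm).mul_pow, hr, mul_zero]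
  have hss_m : Module.End.IsSemisimple (R := ℂ) (M := m → ℂ) (Matrix.toLinAlgEquiv' sm) := by
    show Module.End.IsSemisimple (e sm)
    rw [hesm]; exact hss
  obtain ⟨q, hq⟩ := exists_exp_aeval_eq_of_semisimple sm hss_m hsm_unit
  have hln := exp_aeval_Lp k hk_pow
  set Ls := Polynomial.aeval sm q with hLs
  set Ln := Polynomial.aeval k (Lp r) with hLn
  have hsmk : Commute sm k := by
    have c3 : Commute sm (↑u : Matrix m m ℂ) := by rw [hu_spec]
    exact (c3.units_inv_right).mul_right hnmsm.symm
  have hLsLn : Commute Ls Ln := commute_aeval hsmk q (Lp r)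
  refine ⟨Ls + Ln, ?_, ?_⟩
  · rw [Matrix.exp_add_of_commute Ls Ln hLsLn, hq, hln]
    rw [mul_add, mul_one, hk_def, ← mul_assoc, ← hu_spec, Units.mul_inv, one_mul, hMsum, hu_spec]
    abel
  · intro W hW
    have hpW : ∀ p : ℂ[X], Commute (Polynomial.aeval M p) W := by
      intro p
      have := commute_aeval (a := M) (b := W) hW p X
      rwa [Polynomial.aeval_X] at this
    have hsmW : Commute sm W := hpW ps
    have hnmW : Commute nm W := hpW pn
    have huW : Commute (↑u⁻¹ : Matrix m m ℂ) W := by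
      have : Commute (↑u : Matrix m m ℂ) W := by rw [hu_spec]; exact hsmW
      exact this.units_inv_left
    have hkW : Commute k W := huW.mul_left hnmW
    have hLsW : Commute Ls W := by
      have := commute_aeval (a := sm) (b := W) hsmW q X
      rwa [Polynomial.aeval_X] at this
    have hLnW : Commute Ln W := by
      have := commute_aeval (a := k) (b := W) hkW (Lp r) X
      rwa [Polynomial.aeval_X] at this
    exact hLsW.add_left hLnW




/-- the block shift matrix -/
def S (n p : ℕ) [NeZero p] : Matrix (Fin p × Fin n) (Fin p × Fin n) ℂ :=
  Matrix.of fun jr kc => if jr.1 = kc.1 + 1 ∧ jr.2 = kc.2 then 1 else 0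

variable {n p : ℕ} [NeZero p]
open Fin.NatCast Fin.CommRing

lemma mul_S_apply (W : Matrix (Fin p × Fin n) (Fin p × Fin n) ℂ) (x y : Fin p × Fin n) :
    (W * S n p) x y = W x (y.1 + 1, y.2) := by
  rw [Matrix.mul_apply, Finset.sum_eq_single ((y.1 + 1 : Fin p), y.2)]
  · show W x _ * (if y.1 + 1 = y.1 + 1 ∧ y.2 = y.2 then (1:ℂ) else 0) = _
    simp
  · intro z _ hz
    have hz' : ¬(z.1 = y.1 + 1 ∧ z.2 = y.2) := by
      rintro ⟨h1, h2⟩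
      exact hz (Prod.ext h1 h2)
    show W x z * (if z.1 = y.1 + 1 ∧ z.2 = y.2 then (1:ℂ) else 0) = 0
    rw [if_neg hz', mul_zero]
  · intro h
    exact absurd (Finset.mem_univ _) h

lemma S_mul_apply (W : Matrix (Fin p × Fin n) (Fin p × Fin n) ℂ) (x y : Fin p × Fin n) :
    (S n p * W) x y = W (x.1 - 1, x.2) y := by
  rw [Matrix.mul_apply, Finset.sum_eq_single ((x.1 - 1 : Fin p), x.2)]
  · show (if x.1 = x.1 - 1 + 1 ∧ x.2 = x.2 then (1:ℂ) else 0) * W _ y = _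
    rw [if_pos ⟨(sub_add_cancel x.1 1).symm, rfl⟩, one_mul]
  · intro z _ hz
    have hz' : ¬(x.1 = z.1 + 1 ∧ x.2 = z.2) := by
      rintro ⟨h1, h2⟩
      apply hz
      have : z.1 = x.1 - 1 := by rw [h1]; ring
      exact Prod.ext this h2.symm
    show (if x.1 = z.1 + 1 ∧ x.2 = z.2 then (1:ℂ) else 0) * W z y = 0
    rw [if_neg hz', zero_mul]
  · intro h
    exact absurd (Finset.mem_univ _) h

lemma commute_bcirc_S (A : Fin p → Matrix (Fin n) (Fin n) ℂ) :
    Commute (bcirc A) (S n p) := by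
  show bcirc A * S n p = S n p * bcirc A
  ext x y
  rw [mul_S_apply, S_mul_apply]
  show A (x.1 - (y.1 + 1)) x.2 y.2 = A (x.1 - 1 - y.1) x.2 y.2
  congr 1
  ring

lemma eq_bcirc_tfold_of_commute {W : Matrix (Fin p × Fin n) (Fin p × Fin n) ℂ}
    (hW : S n p * W = W * S n p) : W = bcirc (tfold W) := by
  have key : ∀ x y : Fin p × Fin n, W (x.1 - 1, x.2) y = W x (y.1 + 1, y.2) := by
    intro x y
    have h := S_mul_apply W x y
    rw [hW, mul_S_apply] at h
    exact h.symm
  have step : ∀ (j k : Fin p) (r c : Fin n), W (j, r) (k, c) = W (j - 1, r) (k - 1, c) := by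
    intro j k r c
    have h := key (j, r) (k - 1, c)
    rw [show (k - 1 + 1 : Fin p) = k from sub_add_cancel k 1] at h
    exact h.symm
  have iter : ∀ (a : ℕ) (j k : Fin p) (r c : Fin n),
      W (j, r) (k, c) = W (j - (a : Fin p), r) (k - (a : Fin p), c) := by
    intro a
    induction a with
    | zero => intro j k r c; simp
    | succ a ih =>
      intro j k r c
      rw [ih j k r c, step]
      congr 2 <;> · push_cast; ring
  ext ⟨j, r⟩ ⟨k, c⟩
  show W (j, r) (k, c) = W (j - k, r) (0, c)
  have h := iter k.val j k r c
  rwa [Fin.cast_val_eq_self, sub_self] at h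

lemma bcirc_tmul (A B : Fin p → Matrix (Fin n) (Fin n) ℂ) :
    bcirc (tmul A B) = bcirc A * bcirc B := by
  ext ⟨j, r⟩ ⟨k, c⟩
  rw [Matrix.mul_apply, Fintype.sum_prod_type]
  show (∑ l : Fin p, A (j - k - l) * B l) r c
      = ∑ l : Fin p, ∑ t : Fin n, A (j - l) r t * B (l - k) t c
  rw [Matrix.sum_apply]
  refine Fintype.sum_equiv (Equiv.addRight k) _ _ ?_
  intro m
  show (A (j - k - m) * B m) r c = ∑ t : Fin n, A (j - (m + k)) r t * B (m + k - k) t c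
  rw [Matrix.mul_apply]
  refine Finset.sum_congr rfl fun t _ => ?_
  rw [show (j - k - m : Fin p) = j - (m + k) by ring, show (m + k - k : Fin p) = m by ring]

lemma bcirc_tId : bcirc (tId : Fin p → Matrix (Fin n) (Fin n) ℂ) = 1 := by
  ext ⟨j, r⟩ ⟨k, c⟩
  show (if j - k = 0 then (1 : Matrix (Fin n) (Fin n) ℂ) else 0) r c
      = (1 : Matrix (Fin p × Fin n) (Fin p × Fin n) ℂ) (j, r) (k, c)
  split_ifs with h
  · have hjk : j = k := by rwa [sub_eq_zero] at h
    subst hjk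
    by_cases hrc : r = c <;> simp [Matrix.one_apply, Prod.ext_iff, hrc]
  · have hjk : j ≠ k := fun he => h (by rw [he, sub_self])
    show (0 : Matrix (Fin n) (Fin n) ℂ) r c = _
    simp [Matrix.one_apply, Prod.ext_iff, hjk]

lemma tfold_bcirc (A : Fin p → Matrix (Fin n) (Fin n) ℂ) : tfold (bcirc A) = A := by
  funext i
  ext r c
  show A (i - 0) r c = A i r c
  rw [sub_zero]

lemma bcirc_add (A B : Fin p → Matrix (Fin n) (Fin n) ℂ) :
    bcirc (A + B) = bcirc A + bcirc B := rfl

lemma bcirc_smul (c : ℂ) (A : Fin p → Matrix (Fin n) (Fin n) ℂ) :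
    bcirc (c • A) = c • bcirc A := rfl

lemma exp_smul_one {m : Type*} [Fintype m] [DecidableEq m] (c : ℂ) :
    NormedSpace.exp (c • (1 : Matrix m m ℂ)) = Complex.exp c • 1 := by
  letI : SeminormedRing (Matrix m m ℂ) := Matrix.linftyOpSemiNormedRing
  letI : NormedRing (Matrix m m ℂ) := Matrix.linftyOpNormedRing
  letI : NormedAlgebra ℂ (Matrix m m ℂ) := Matrix.linftyOpNormedAlgebra
  have h1 : c • (1 : Matrix m m ℂ) = algebraMap ℂ _ c :=
    (Algebra.algebraMap_eq_smul_one c).symm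
  rw [h1]
  have := NormedSpace.map_exp (algebraMap ℂ (Matrix m m ℂ)) (continuous_algebraMap ℂ _) c
  rw [← Complex.exp_eq_exp_ℂ, Algebra.algebraMap_eq_smul_one] at this
  exact this.symm

end TLog

/-- every invertible tensor has a tensor logarithm, and solutions
of `exp(X) = A` are stable under adding `2kπi · I`. -/
theorem texp_eq_of_invertible {n p : ℕ} [NeZero p]
    (A : Fin p → Matrix (Fin n) (Fin n) ℂ) (hA : TInvertible A) :
    (∃ X : Fin p → Matrix (Fin n) (Fin n) ℂ, texp X = A) ∧
      ∀ (X : Fin p → Matrix (Fin n) (Fin n) ℂ) (k : ℤ), texp X = A →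
        texp (X + ((2 * (k : ℂ) * Real.pi * Complex.I) • tId)) = A := by
  constructor
  · obtain ⟨B, h1, h2⟩ := hA
    have hunit : IsUnit (bcirc A) :=
      ⟨⟨bcirc A, bcirc B, by rw [← TLog.bcirc_tmul, h1, TLog.bcirc_tId],
        by rw [← TLog.bcirc_tmul, h2, TLog.bcirc_tId]⟩, rfl⟩
    obtain ⟨L, hL, hcomm⟩ := TLog.exists_log _ hunit
    have hLS : Commute L (TLog.S n p) := hcomm _ (TLog.commute_bcirc_S A)
    have hLb : L = bcirc (tfold L) := TLog.eq_bcirc_tfold_of_commute hLS.symm.eq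
    refine ⟨tfold L, ?_⟩
    rw [texp, ← hLb, hL, TLog.tfold_bcirc]
  · intro X k hX
    rw [texp, TLog.bcirc_add, TLog.bcirc_smul, TLog.bcirc_tId,
      Matrix.exp_add_of_commute _ _ ((Commute.one_right _).smul_right _),
      TLog.exp_smul_one]
    have hone : Complex.exp (2 * (k : ℂ) * Real.pi * Complex.I) = 1 := by
      rw [Complex.exp_eq_one_iff]
      exact ⟨k, by push_cast; ring⟩
    rw [hone, one_smul, mul_one]
    exact hX


end
end
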